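/- Let Y be an n₁×n₂ real matrix of rank r, and let I ⊆ {1,...,n₁} and J ⊆ {1,...,n₂} be index sets of size r such that the r×r submatrix Y(I,J) is invertible. Then Y = Y(:,J) · Y(I,J)^{-1} · Y(I,:), i.e., the CUR decomposition recovers Y exactly. -/
import Mathlib


open Matrix

/-- CUR decomposition: if `Y` is an `n₁ × n₂` real matrix of rank `r`, and
`I ⊆ {1,…,n₁}`, `J ⊆ {1,…,n₂}` (encoded by injective maps `g`, `h`) are index
sets of size `r` such that the `r × r` submatrix `Y(I,J)` is invertible, then
`Y = Y(:,J) · Y(I,J)⁻¹ · Y(I,:)`. -/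
theorem cur_decomposition_exact
    {n₁ n₂ r : ℕ} (Y : Matrix (Fin n₁) (Fin n₂) ℝ)
    (hrank : Y.rank = r)
    (g : Fin r → Fin n₁) (hg : Function.Injective g)
    (h : Fin r → Fin n₂) (hh : Function.Injective h)
    (hInv : IsUnit (Y.submatrix g h)) :
    Y = Y.submatrix id h * (Y.submatrix g h)⁻¹ * Y.submatrix g id := by
  set A := Y.submatrix g h with hA
  set C := Y.submatrix id h with hC
  set R := Y.submatrix g id with hR
  -- the square submatrix has full rank
  have hrA : A.rank = r := by
    rw [Matrix.rank_of_isUnit A hInv, Fintype.card_fin]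
  -- A's mulVecLin factors through C's
  have hcomp : A.mulVecLin = (LinearMap.funLeft ℝ ℝ g).comp C.mulVecLin := by
    ext v i
    simp [Matrix.mulVecLin, Matrix.mulVec, dotProduct, hA, hC, Pi.single_apply]
  have hCle : A.rank ≤ C.rank := by
    rw [Matrix.rank, Matrix.rank, hcomp, LinearMap.range_comp]
    exact Submodule.finrank_map_le _ _
  have hCr : C.rank = r :=
    le_antisymm (C.rank_le_card_width.trans (by simp)) (hrA.ge.trans hCle)
  -- each column of C is a column of Y, so range C ≤ range Y
  have hsub : LinearMap.range C.mulVecLin ≤ LinearMap.range Y.mulVecLin := by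
    rintro x ⟨v, rfl⟩
    refine ⟨fun k => ∑ j, if k = h j then v j else 0, ?_⟩
    ext i
    simp only [Matrix.mulVecLin_apply, Matrix.mulVec, dotProduct, hC,
      Matrix.submatrix_apply, id_eq, Finset.mul_sum]
    rw [Finset.sum_comm]
    refine Finset.sum_congr rfl fun j _ => ?_
    rw [Finset.sum_eq_single (h j)] <;> simp +contextual
  have hRange : LinearMap.range C.mulVecLin = LinearMap.range Y.mulVecLin := by
    refine Submodule.eq_of_le_of_finrank_eq hsub ?_
    have : C.rank = Y.rank := by rw [hCr, hrank]
    simpa [Matrix.rank] using this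
  -- invertibility facts
  have hdet : IsUnit A.det := (Matrix.isUnit_iff_isUnit_det A).mp hInv
  have hinvA : A⁻¹ * A = 1 := Matrix.nonsing_inv_mul A hdet
  ext i j
  -- the j-th column of Y is in the range of C
  have hcol : (fun i => Y i j) ∈ LinearMap.range Y.mulVecLin := by
    refine ⟨Pi.single j 1, ?_⟩
    ext i
    simp [Matrix.mulVecLin_apply, Matrix.mulVec_single]
  rw [← hRange] at hcol
  obtain ⟨v, hv⟩ := hcol
  have hv' : C.mulVec v = fun i => Y i j := hv
  have hAv : A.mulVec v = fun i => R i j := by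
    ext i
    have := congrFun hv' (g i)
    simpa [Matrix.mulVec, dotProduct, hA, hC, hR] using this
  have hvv : A⁻¹.mulVec (A.mulVec v) = v := by
    rw [Matrix.mulVec_mulVec, hinvA, Matrix.one_mulVec]
  calc Y i j = C.mulVec v i := (congrFun hv' i).symm
    _ = C.mulVec (A⁻¹.mulVec (fun k => R k j)) i := by rw [← hAv, hvv]
    _ = (C * A⁻¹ * R) i j := by
        rw [Matrix.mulVec_mulVec]
        simp [Matrix.mul_apply, Matrix.mulVec, dotProduct]
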